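/- Let G be a strongly regular graph with parameters (19, 6, 1, 2), let {a, b, c} be a triangle in G with associated sets A, B, C, and let W be the set of vertices distinct from and non-adjacent to all of a, b, c. Then no vertex w ∈ W belongs to two distinct triangles of the form {w, x, y} and {w, x', y'} with x, x' ∈ A and y, y' ∈ B together with a third triangle whose other two vertices both lie in C; equivalently, the three triangles through any w ∈ W cannot have their base edges distributed as two edges between A and B and one edge inside C. -/
import Mathlib


/-- For a triangle {a,b,c} in an srg(19,6,1,2), no vertex w of W lies in two distinct
triangles each having one vertex in A and one in B, together with a third triangle whose
other two vertices both lie in C. -/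
theorem srg_19_6_1_2_no_bad_triangle_distribution
    {V : Type} [Fintype V] [DecidableEq V] (G : SimpleGraph V) [DecidableRel G.Adj]
    (h : G.IsSRGWith 19 6 1 2) (a b c : V)
    (hab : G.Adj a b) (hac : G.Adj a c) (hbc : G.Adj b c)
    (A B C W : Finset V)
    (hA : A = Finset.univ.filter (fun v => G.Adj a v ∧ v ≠ b ∧ v ≠ c))
    (hB : B = Finset.univ.filter (fun v => G.Adj b v ∧ v ≠ a ∧ v ≠ c))
    (hC : C = Finset.univ.filter (fun v => G.Adj c v ∧ v ≠ a ∧ v ≠ b))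
    (hW : W = Finset.univ \ (A ∪ B ∪ C ∪ {a, b, c})) :
    ∀ w ∈ W, ∀ x x' y y' u u' : V,
      x ∈ A → x' ∈ A → y ∈ B → y' ∈ B → u ∈ C → u' ∈ C →
      G.Adj w x → G.Adj w y → G.Adj x y →
      G.Adj w x' → G.Adj w y' → G.Adj x' y' →
      ¬(x = x' ∧ y = y') →
      G.Adj w u → G.Adj w u' → G.Adj u u' → False := by
  intro w hw x x' y y' u u' hxA hx'A hyB hy'B huC hu'C
    hwx hwy hxy hwx' hwy' hx'y' hne hwu hwu' huu'
  -- w ≠ c since w ∈ W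
  have hwc : w ≠ c := by
    subst hW
    simp only [Finset.mem_sdiff, Finset.mem_union, Finset.mem_insert,
      Finset.mem_singleton] at hw
    rintro rfl
    exact hw.2 (by tauto)
  -- c is adjacent to u and u'
  have hcu : G.Adj c u := by
    rw [hC] at huC; exact (Finset.mem_filter.mp huC).2.1
  have hcu' : G.Adj c u' := by
    rw [hC] at hu'C; exact (Finset.mem_filter.mp hu'C).2.1
  -- c and w are two common neighbors of the adjacent pair (u, u'), but λ = 1
  have hcard : Fintype.card (G.commonNeighbors u u') = 1 := h.of_adj u u' huu'
  have hcmem : c ∈ G.commonNeighbors u u' := ⟨hcu.symm, hcu'.symm⟩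
  have hwmem : w ∈ G.commonNeighbors u u' := ⟨hwu.symm, hwu'.symm⟩
  have : (⟨c, hcmem⟩ : G.commonNeighbors u u') = ⟨w, hwmem⟩ :=
    Fintype.card_le_one_iff.mp (le_of_eq hcard) _ _
  exact hwc (congrArg Subtype.val this).symm
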